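/- Let $h=(1,2,\dots,t,h_t,\dots,h_s)$ be an admissible Hilbert function. The dimension of the homogeneous sub-cell of the lex-segment Gr\"obner cell, given by $\#\{(i,j): u_{i,j}=0,\ j\leq i-2\}+\#\{(i,j): u_{i,j}=1,\ j\leq i-1,\ d_j\neq 1\}$, equals $t+\sum_{i=t-1}^{s}(h_{i-1}-h_i)(h_i-h_{i+1})$. -/

import Mathlib

open Finset

private lemma gmono_aux (t : ℕ) (m : ℕ → ℤ)
    (hmono : ∀ i, i < t → m i < m (i + 1)) :
    ∀ j k, j ≤ k → k ≤ t → m j - (j:ℤ) ≤ m k - (k:ℤ) := by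
  intro j k hjk hkt
  induction k with
  | zero =>
    have : j = 0 := by omega
    subst this; exact le_refl _
  | succ k ih =>
    rcases Nat.eq_or_lt_of_le hjk with rfl | hlt
    · exact le_refl _
    · have h1 : m j - (j:ℤ) ≤ m k - (k:ℤ) := ih (by omega) (by omega)
      have h2 : m k < m (k+1) := hmono k (by omega)
      push_cast
      push_cast at h1
      linarith

/-- For an admissible Hilbert function `h` (realized as the staircase of the
lex-segment ideal given by `0 = m 0 < ⋯ < m t`), the dimension of the homogeneous sub-cell,
computed as `#{(i,j) : u i j = 0, j ≤ i-2} + #{(i,j) : u i j = 1, j ≤ i-1, d j ≠ 1}`,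
equals `t + ∑_{i = t-1}^{s} (h (i-1) - h i) * (h i - h (i+1))` (with `h` extended by `0`
at negative indices). -/
theorem stmt_7 (t : ℕ) (ht : 1 ≤ t) (m : ℕ → ℤ) (hm0 : m 0 = 0)
    (hmono : ∀ i, i < t → m i < m (i + 1))
    (u : ℕ → ℕ → ℤ) (hu : ∀ i j, u i j = m j - m (i - 1) + (i : ℤ) - (j : ℤ))
    (d : ℕ → ℤ) (hd : ∀ j, d j = m j - m (j - 1))
    (h : ℕ → ℕ)
    (hh : ∀ i, h i = ((Finset.range t).filter
      (fun a => a ≤ i ∧ ((i - a : ℕ) : ℤ) < m (t - a))).card)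
    (hz : ℤ → ℤ) (hhz : ∀ i : ℤ, hz i = if i < 0 then 0 else (h i.toNat : ℤ))
    (S : ℕ) (hS : S = t + (m t).toNat + 2) :
    ((((Finset.Icc 1 (t + 1) ×ˢ Finset.Icc 1 t).filter
        (fun p => p.2 + 2 ≤ p.1 ∧ u p.1 p.2 = 0)).card : ℤ)
      + (((Finset.Icc 1 (t + 1) ×ˢ Finset.Icc 1 t).filter
        (fun p => p.2 + 1 ≤ p.1 ∧ u p.1 p.2 = 1 ∧ d p.2 ≠ 1)).card : ℤ))
      = (t : ℤ) + ∑ i ∈ Finset.Icc ((t : ℤ) - 1) (S : ℤ),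
          (hz (i - 1) - hz i) * (hz i - hz (i + 1)) := by
  classical
  set G : ℕ → ℤ := fun k => m k - (k:ℤ) with hGdef
  have gmono : ∀ j k, j ≤ k → k ≤ t → G j ≤ G k := gmono_aux t m hmono
  have g0 : G 0 = 0 := by simp [hGdef, hm0]
  have gnn : ∀ k, k ≤ t → 0 ≤ G k := fun k hk => g0 ▸ gmono 0 k (Nat.zero_le _) hk
  set c : ℤ → ℕ := fun e => ((Icc 1 t).filter (fun k => G k = e)).card with hcdef
  have hGdef' : G = fun k => m k - (k:ℤ) := hGdef
  have hcdef' : c = fun e => ((Icc 1 t).filter (fun k => G k = e)).card := hcdef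
  -- # LHS part A
  have hA : (((Finset.Icc 1 (t + 1) ×ˢ Finset.Icc 1 t).filter
        (fun p => p.2 + 2 ≤ p.1 ∧ u p.1 p.2 = 0)).card : ℤ)
      = ∑ j ∈ Icc 1 t, (c (G j + 1) : ℤ) := by
    have hfilt : (Finset.Icc 1 (t + 1) ×ˢ Finset.Icc 1 t).filter
          (fun p => p.2 + 2 ≤ p.1 ∧ u p.1 p.2 = 0)
        = (Finset.Icc 1 (t + 1) ×ˢ Finset.Icc 1 t).filter
          (fun p => G (p.1 - 1) = G p.2 + 1) := by
      apply filter_congr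
      rintro ⟨i, j⟩ hp
      simp only [mem_product, mem_Icc] at hp
      obtain ⟨⟨hi1, hi2⟩, hj1, hj2⟩ := hp
      have hcast : ((i - 1 : ℕ) : ℤ) = (i:ℤ) - 1 := by omega
      simp only [hGdef', hu, hcast]
      constructor
      · rintro ⟨hle, hu0⟩
        linarith
      · intro hg
        have hle : j + 2 ≤ i := by
          by_contra hcon
          have hij : i - 1 ≤ j := by omega
          have := gmono (i-1) j hij hj2
          simp only [hGdef', hcast] at this
          linarith
        exact ⟨hle, by linarith⟩
    have hmain : ((Finset.Icc 1 (t + 1) ×ˢ Finset.Icc 1 t).filter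
          (fun p => p.2 + 2 ≤ p.1 ∧ u p.1 p.2 = 0)).card
        = ∑ j ∈ Icc 1 t, c (G j + 1) := by
      rw [hfilt, Finset.card_filter, Finset.sum_product]
      rw [Finset.sum_comm]
      apply Finset.sum_congr rfl
      intro j hj
      simp only [mem_Icc] at hj
      rw [← Finset.card_filter]
      rw [hcdef']
      apply Finset.card_nbij' (fun i => i - 1) (fun k => k + 1)
      · intro a ha
        simp only [mem_coe, mem_filter, mem_Icc] at ha ⊢
        refine ⟨⟨?_, by omega⟩, ha.2⟩
        by_contra hcon
        have ha1 : a - 1 = 0 := by omega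
        rw [ha1, g0] at ha
        have := gnn j hj.2
        omega
      · intro k hk
        simp only [mem_coe, mem_filter, mem_Icc] at hk ⊢
        exact ⟨⟨by omega, by omega⟩, by simpa using hk.2⟩
      · intro a ha
        simp only [mem_coe, mem_filter, mem_Icc] at ha ⊢
        omega
      · intro k hk
        simp only [mem_coe, mem_filter, mem_Icc] at hk ⊢
        omega
    rw [hmain]
    push_cast
    rfl
  -- # LHS part B
  have hB : ((Finset.Icc 1 (t + 1) ×ˢ Finset.Icc 1 t).filter
        (fun p => p.2 + 1 ≤ p.1 ∧ u p.1 p.2 = 1 ∧ d p.2 ≠ 1)).card + c 0 = t := by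
    have hfilt : (Finset.Icc 1 (t + 1) ×ˢ Finset.Icc 1 t).filter
          (fun p => p.2 + 1 ≤ p.1 ∧ u p.1 p.2 = 1 ∧ d p.2 ≠ 1)
        = (Finset.Icc 1 (t + 1) ×ˢ Finset.Icc 1 t).filter
          (fun p => G (p.1 - 1) = G p.2 ∧ G p.2 ≠ G (p.2 - 1)) := by
      apply filter_congr
      rintro ⟨i, j⟩ hp
      simp only [mem_product, mem_Icc] at hp
      obtain ⟨⟨hi1, hi2⟩, hj1, hj2⟩ := hp
      have hcasti : ((i - 1 : ℕ) : ℤ) = (i:ℤ) - 1 := by omega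
      have hcastj : ((j - 1 : ℕ) : ℤ) = (j:ℤ) - 1 := by omega
      have hu1 : u i j = 1 ↔ G (i-1) = G j := by
        rw [hu]
        simp only [hGdef', hcasti]
        constructor <;> intro hx <;> linarith
      have hd1 : d j ≠ 1 ↔ G j ≠ G (j-1) := by
        rw [hd]
        simp only [hGdef', hcastj]
        constructor <;> intro hx hy <;> apply hx <;> linarith
      rw [hu1, hd1]
      constructor
      · rintro ⟨-, h2, h3⟩; exact ⟨h2, h3⟩
      · rintro ⟨h2, h3⟩
        refine ⟨?_, h2, h3⟩
        by_contra hcon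
        have h4 : i - 1 ≤ j - 1 := by omega
        have h5 := gmono (i-1) (j-1) h4 (by omega)
        have h6 := gmono (j-1) j (by omega) hj2
        apply h3
        linarith
    have key : ∀ k, k ≤ t →
        ((Icc 1 t).filter (fun j => G k = G j ∧ G j ≠ G (j-1))).card
          = if 1 ≤ G k then 1 else 0 := by
      intro k hk
      by_cases hgk : 1 ≤ G k
      · rw [if_pos hgk]
        have hkne : k ≠ 0 := by
          intro hk0; rw [hk0, g0] at hgk; omega
        have hex : ∃ j, G j = G k := ⟨k, rfl⟩
        set j0 := Nat.find hex with hj0def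
        have hj0spec : G j0 = G k := Nat.find_spec hex
        have hj0le : j0 ≤ k := Nat.find_min' hex rfl
        have hj0pos : 1 ≤ j0 := by
          rcases Nat.eq_zero_or_pos j0 with h0 | h1
          · rw [h0, g0] at hj0spec; omega
          · exact h1
        have hj0ne : G j0 ≠ G (j0 - 1) := by
          intro heq
          have : G (j0 - 1) = G k := by rw [← heq, hj0spec]
          exact Nat.find_min hex (by omega) this
        have : (Icc 1 t).filter (fun j => G k = G j ∧ G j ≠ G (j-1)) = {j0} := by
          ext j
          simp only [mem_filter, mem_Icc, mem_singleton]
          constructor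
          · rintro ⟨⟨hj1, hj2⟩, heq, hne⟩
            have hge : j0 ≤ j := Nat.find_min' hex heq.symm
            rcases Nat.eq_or_lt_of_le hge with heq2 | hlt
            · omega
            · exfalso
              have h5 := gmono j0 (j-1) (by omega) (by omega)
              have h6 := gmono (j-1) j (by omega) hj2
              apply hne
              linarith
          · intro hj
            subst hj
            exact ⟨⟨hj0pos, by omega⟩, hj0spec.symm, hj0ne⟩
        rw [this, card_singleton]
      · rw [if_neg hgk]
        rw [Finset.card_eq_zero, Finset.filter_eq_empty_iff]
        rintro j hj ⟨heq, hne⟩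
        simp only [mem_Icc] at hj
        have hg0 : G k = 0 := le_antisymm (by omega) (gnn k hk)
        have h5 := gnn (j-1) (by omega)
        have h6 := gmono (j-1) j (by omega) hj.2
        apply hne
        linarith
    have hmain : ((Finset.Icc 1 (t + 1) ×ˢ Finset.Icc 1 t).filter
          (fun p => p.2 + 1 ≤ p.1 ∧ u p.1 p.2 = 1 ∧ d p.2 ≠ 1)).card
        = ((Icc 1 t).filter (fun k => 1 ≤ G k)).card := by
      rw [hfilt, Finset.card_filter, Finset.sum_product]
      have hstep : ∀ i ∈ Icc 1 (t+1),
          (∑ j ∈ Icc 1 t, if G (i-1) = G j ∧ G j ≠ G (j-1) then 1 else 0)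
            = if 1 ≤ G (i-1) then 1 else 0 := by
        intro i hi
        simp only [mem_Icc] at hi
        rw [← Finset.card_filter]
        exact key (i-1) (by omega)
      rw [Finset.sum_congr rfl hstep, ← Finset.card_filter]
      apply Finset.card_nbij' (fun i => i - 1) (fun k => k + 1)
      · intro a ha
        simp only [mem_coe, mem_filter, mem_Icc] at ha ⊢
        refine ⟨⟨?_, by omega⟩, ha.2⟩
        by_contra hcon
        have ha1 : a - 1 = 0 := by omega
        rw [ha1, g0] at ha
        omega
      · intro k hk
        simp only [mem_coe, mem_filter, mem_Icc] at hk ⊢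
        exact ⟨⟨by omega, by omega⟩, by simpa using hk.2⟩
      · intro a ha
        simp only [mem_coe, mem_filter, mem_Icc] at ha ⊢
        omega
      · intro k hk
        simp only [mem_coe, mem_filter, mem_Icc] at hk ⊢
        omega
    rw [hmain]
    have hc0 : c 0 = ((Icc 1 t).filter (fun k => G k = 0)).card := by rw [hcdef']
    have hsplit := Finset.card_filter_add_card_filter_not
      (s := Icc 1 t) (p := fun k => G k = 0)
    have hcongr : (Icc 1 t).filter (fun k => ¬ G k = 0)
        = (Icc 1 t).filter (fun k => 1 ≤ G k) := by
      apply filter_congr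
      intro k hk
      simp only [mem_Icc] at hk
      have := gnn k hk.2
      constructor <;> intro hx <;> omega
    rw [hcongr] at hsplit
    simp only [Nat.card_Icc] at hsplit
    omega
  -- # Hilbert function values in the tail
  have hval : ∀ n : ℕ, t - 1 ≤ n →
      h n = ((Icc 1 t).filter (fun k => (n:ℤ) + 1 - t ≤ G k)).card := by
    intro n hn
    rw [hh n]
    apply Finset.card_nbij' (fun a => t - a) (fun k => t - k)
    · intro a ha
      simp only [mem_coe, mem_filter, mem_range, mem_Icc] at ha ⊢
      obtain ⟨halt, han, hacond⟩ := ha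
      refine ⟨⟨by omega, by omega⟩, ?_⟩
      have h1 : ((n - a : ℕ) : ℤ) = (n:ℤ) - a := by omega
      have h2 : ((t - a : ℕ) : ℤ) = (t:ℤ) - a := by omega
      rw [h1] at hacond
      simp only [hGdef', h2]
      linarith
    · intro k hk
      simp only [mem_coe, mem_filter, mem_range, mem_Icc] at hk ⊢
      obtain ⟨⟨hk1, hk2⟩, hkcond⟩ := hk
      refine ⟨by omega, by omega, ?_⟩
      have h3 : t - (t - k) = k := by omega
      have h1 : ((n - (t - k) : ℕ) : ℤ) = (n:ℤ) - ((t:ℤ) - k) := by omega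
      rw [h3, h1]
      simp only [hGdef'] at hkcond
      linarith
    · intro a ha
      simp only [mem_coe, mem_filter, mem_range] at ha ⊢
      omega
    · intro k hk
      simp only [mem_coe, mem_filter, mem_Icc] at hk ⊢
      omega
  -- # first difference of `hz` in the tail is `c`
  have hcdiff : ∀ e : ℤ, 0 ≤ e → (c e : ℤ) = hz ((t:ℤ) - 1 + e) - hz ((t:ℤ) + e) := by
    intro e he
    set n : ℕ := t - 1 + e.toNat with hndef
    have hetn : (e.toNat : ℤ) = e := Int.toNat_of_nonneg he
    have hncast : (n : ℤ) = (t:ℤ) - 1 + e := by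
      simp only [hndef]; push_cast; omega
    have hz1 : hz ((t:ℤ) - 1 + e) = (h n : ℤ) := by
      rw [hhz, if_neg (by omega)]
      have harg : ((t:ℤ) - 1 + e).toNat = n := by omega
      rw [harg]
    have hz2 : hz ((t:ℤ) + e) = (h (n+1) : ℤ) := by
      rw [hhz, if_neg (by omega)]
      have harg : ((t:ℤ) + e).toNat = n + 1 := by omega
      rw [harg]
    have hv1 : h n = ((Icc 1 t).filter (fun k => e ≤ G k)).card := by
      rw [hval n (by omega)]
      congr 1
      apply filter_congr
      intro k _
      constructor <;> intro hx <;> [linarith [hncast]; linarith [hncast]]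
    have hv2 : h (n+1) = ((Icc 1 t).filter (fun k => e + 1 ≤ G k)).card := by
      rw [hval (n+1) (by omega)]
      congr 1
      apply filter_congr
      intro k _
      have : ((n+1 : ℕ) : ℤ) = (t:ℤ) + e := by push_cast; omega
      rw [this]
      constructor <;> intro hx <;> linarith
    have hsplit := Finset.card_filter_add_card_filter_not
      (s := (Icc 1 t).filter (fun k => e ≤ G k)) (p := fun k => G k = e)
    rw [Finset.filter_filter, Finset.filter_filter] at hsplit
    have he1 : (Icc 1 t).filter (fun k => e ≤ G k ∧ G k = e)
        = (Icc 1 t).filter (fun k => G k = e) := by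
      apply filter_congr; intro k _
      constructor
      · rintro ⟨-, hx⟩; exact hx
      · intro hx; exact ⟨le_of_eq hx.symm, hx⟩
    have he2 : (Icc 1 t).filter (fun k => e ≤ G k ∧ ¬ G k = e)
        = (Icc 1 t).filter (fun k => e + 1 ≤ G k) := by
      apply filter_congr; intro k _
      constructor
      · rintro ⟨hx, hy⟩
        rcases lt_or_eq_of_le hx with hlt | heq
        · omega
        · exact absurd heq.symm hy
      · intro hx; exact ⟨by omega, by omega⟩
    rw [he1, he2] at hsplit
    have hce : c e = ((Icc 1 t).filter (fun k => G k = e)).card := by rw [hcdef']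
    rw [hz1, hz2, hv1, hv2]
    omega
  -- # boundary values
  have hzt1 : hz ((t:ℤ) - 1) = (t:ℤ) := by
    rw [hhz, if_neg (by omega)]
    have harg : ((t:ℤ) - 1).toNat = t - 1 := by omega
    rw [harg, hval (t-1) (le_refl _)]
    have : (Icc 1 t).filter (fun k => ((t-1 : ℕ):ℤ) + 1 - t ≤ G k) = Icc 1 t := by
      apply Finset.filter_true_of_mem
      intro k hk
      simp only [mem_Icc] at hk
      have := gnn k hk.2
      omega
    rw [this]
    simp
  have hzt2 : hz ((t:ℤ) - 2) = (t:ℤ) - 1 := by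
    by_cases h1 : t = 1
    · subst h1
      rw [hhz, if_pos (by norm_num)]
      norm_num
    · have h2t : 2 ≤ t := by omega
      rw [hhz, if_neg (by omega)]
      have harg : ((t:ℤ) - 2).toNat = t - 2 := by omega
      rw [harg, hh]
      have hfilt : (range t).filter
          (fun a => a ≤ t - 2 ∧ ((t - 2 - a : ℕ):ℤ) < m (t - a)) = range (t-1) := by
        ext a
        simp only [mem_filter, mem_range]
        constructor
        · rintro ⟨hx, hy, -⟩; omega
        · intro hx
          refine ⟨by omega, by omega, ?_⟩
          have hg := gnn (t-a) (by omega)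
          simp only [hGdef'] at hg
          omega
      rw [hfilt, card_range]
      omega
  -- # RHS sum computation
  have hsum : ∑ i ∈ Finset.Icc ((t : ℤ) - 1) (S : ℤ),
          (hz (i - 1) - hz i) * (hz i - hz (i + 1))
      = -(c 0 : ℤ) + ∑ e ∈ Icc (0:ℤ) ((S:ℤ) - t), (c e : ℤ) * (c (e+1) : ℤ) := by
    have hmt : 0 ≤ m t := by
      have := gnn t (le_refl _)
      simp only [hGdef'] at this
      omega
    have hSge : (t:ℤ) ≤ (S:ℤ) := by
      rw [hS]; push_cast; omega
    have hins : Finset.Icc ((t:ℤ) - 1) (S:ℤ)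
        = insert ((t:ℤ)-1) (Finset.Icc (t:ℤ) (S:ℤ)) := by
      ext i
      simp only [mem_Icc, mem_insert]
      omega
    rw [hins, Finset.sum_insert (by simp only [mem_Icc]; omega)]
    have hterm : (hz ((t:ℤ)-1-1) - hz ((t:ℤ)-1)) * (hz ((t:ℤ)-1) - hz ((t:ℤ)-1+1))
        = -(c 0 : ℤ) := by
      have e1 : (t:ℤ)-1-1 = (t:ℤ)-2 := by ring
      have e2 : (t:ℤ)-1+1 = (t:ℤ) := by ring
      have h0 := hcdiff 0 (le_refl _)
      have e3 : (t:ℤ)-1+0 = (t:ℤ)-1 := by ring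
      have e4 : (t:ℤ)+0 = (t:ℤ) := by ring
      rw [e3, e4, hzt1] at h0
      rw [e1, e2, hzt2, hzt1]
      have hx : ((t:ℤ) - 1 - t) = -1 := by ring
      rw [hx, h0]
      ring
    rw [hterm]
    congr 1
    apply Finset.sum_nbij' (i := fun i => i - (t:ℤ)) (j := fun e => (t:ℤ) + e)
    · intro a ha
      simp only [mem_Icc] at ha ⊢
      omega
    · intro a ha
      simp only [mem_Icc] at ha ⊢
      omega
    · intro a _; ring
    · intro a _; ring
    · intro i hi
      simp only [mem_Icc] at hi
      have h1 := hcdiff (i - t) (by omega)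
      have h2 := hcdiff (i - t + 1) (by omega)
      have e1 : (t:ℤ)-1+(i-t) = i - 1 := by ring
      have e2 : (t:ℤ)+(i-t) = i := by ring
      have e3 : (t:ℤ)-1+(i-t+1) = i := by ring
      have e4 : (t:ℤ)+(i-t+1) = i+1 := by ring
      rw [e1, e2] at h1
      rw [e3, e4] at h2
      rw [← h1, ← h2]
  -- # fiberwise regrouping of A
  have hAfib : ∑ j ∈ Icc 1 t, (c (G j + 1) : ℤ)
      = ∑ e ∈ Icc (0:ℤ) ((S:ℤ) - t), (c e : ℤ) * (c (e+1) : ℤ) := by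
    have hmt : 0 ≤ m t := by
      have := gnn t (le_refl _)
      simp only [hGdef'] at this
      omega
    have hmaps : ∀ j ∈ Icc 1 t, G j ∈ Icc (0:ℤ) ((S:ℤ) - t) := by
      intro j hj
      simp only [mem_Icc] at hj ⊢
      refine ⟨gnn j hj.2, ?_⟩
      have h1 := gmono j t hj.2 (le_refl _)
      have h2 : G t = m t - t := by simp [hGdef']
      have h3 : ((m t).toNat : ℤ) = m t := Int.toNat_of_nonneg hmt
      rw [hS]
      push_cast
      omega
    rw [← Finset.sum_fiberwise_of_maps_to hmaps (fun j => (c (G j + 1) : ℤ))]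
    apply Finset.sum_congr rfl
    intro e he
    have hinner : ∀ j ∈ (Icc 1 t).filter (fun j => G j = e),
        (c (G j + 1) : ℤ) = (c (e + 1) : ℤ) := by
      intro j hj
      simp only [mem_filter] at hj
      rw [hj.2]
    rw [Finset.sum_congr rfl hinner, Finset.sum_const, nsmul_eq_mul]
  -- # assemble
  rw [hA, hsum, hAfib]
  have hBz : (((Finset.Icc 1 (t + 1) ×ˢ Finset.Icc 1 t).filter
        (fun p => p.2 + 1 ≤ p.1 ∧ u p.1 p.2 = 1 ∧ d p.2 ≠ 1)).card : ℤ) + (c 0 : ℤ)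
      = (t : ℤ) := by
    exact_mod_cast congrArg (Nat.cast : ℕ → ℤ) hB
  linarith
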